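/- Fix n ≥ 1 and let H^{[ij]}, for i, j ∈ {1,2,3}, be invertible diagonal (2n+1)×(2n+1) complex matrices. Define T = H^{[12]} (H^{[21]})^{-1} H^{[23]} (H^{[32]})^{-1} H^{[31]} (H^{[13]})^{-1}, let w be the all-ones column vector, and set A = [w, Tw, T²w, …, T^n w], B = [Tw, T²w, …, T^n w], C = [w, Tw, …, T^{n−1} w]. Define V^{[1]} = A, V^{[3]} = (H^{[23]})^{-1} H^{[21]} B, and V^{[2]} = (H^{[32]})^{-1} H^{[31]} C. Then the interference alignment equations hold: (i) H^{[12]} V^{[2]} = H^{[13]} V^{[3]}; (ii) every column of H^{[23]} V^{[3]} is a column of H^{[21]} V^{[1]}; (iii) every column of H^{[32]} V^{[2]} is a column of H^{[31]} V^{[1]}. -/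

import Mathlib

open Matrix

lemma diag_unit_entries {m : ℕ} (v : Fin m → ℂ)
    (hu : IsUnit (Matrix.diagonal v).det) (i : Fin m) : v i ≠ 0 := by
  rw [Matrix.det_diagonal] at hu
  intro h
  have hz : (∏ j, v j) = 0 := Finset.prod_eq_zero (Finset.mem_univ i) h
  rw [hz] at hu
  exact not_isUnit_zero hu

lemma inv_diag_eq {m : ℕ} (v : Fin m → ℂ) (h : ∀ i, v i ≠ 0) :
    (Matrix.diagonal v)⁻¹ = Matrix.diagonal (fun i => (v i)⁻¹) := by
  apply Matrix.inv_eq_right_inv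
  rw [Matrix.diagonal_mul_diagonal]
  convert Matrix.diagonal_one with i
  exact mul_inv_cancel₀ (h i)

lemma diag_mul_entry {m k : ℕ} (u : Fin m → ℂ) (M : Matrix (Fin m) (Fin k) ℂ)
    (i : Fin m) (j : Fin k) : (Matrix.diagonal u * M) i j = u i * M i j := by
  simp [Matrix.diagonal_mul]

/-- The interference alignment construction for the 3-user interference channel over a
`(2n+1)`-symbol extension: with `T` the cyclic product of the (diagonal, invertible)
channel matrices, `A = [w, Tw, …, Tⁿw]`, `B = [Tw, …, Tⁿw]`, `C = [w, …, Tⁿ⁻¹w]`,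
`V¹ = A`, `V³ = (H²³)⁻¹H²¹B`, `V² = (H³²)⁻¹H³¹C`, we have
(i) `H¹²V² = H¹³V³`, (ii) every column of `H²³V³` is a column of `H²¹V¹`,
(iii) every column of `H³²V²` is a column of `H³¹V¹`. -/
theorem stmt_3 (n : ℕ) (hn : 1 ≤ n)
    (H12 H13 H21 H23 H31 H32 : Matrix (Fin (2*n+1)) (Fin (2*n+1)) ℂ)
    (hd12 : H12.IsDiag) (hd13 : H13.IsDiag) (hd21 : H21.IsDiag)
    (hd23 : H23.IsDiag) (hd31 : H31.IsDiag) (hd32 : H32.IsDiag)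
    (hu12 : IsUnit H12.det) (hu13 : IsUnit H13.det) (hu21 : IsUnit H21.det)
    (hu23 : IsUnit H23.det) (hu31 : IsUnit H31.det) (hu32 : IsUnit H32.det) :
    let T : Matrix (Fin (2*n+1)) (Fin (2*n+1)) ℂ :=
      H12 * H21⁻¹ * H23 * H32⁻¹ * H31 * H13⁻¹
    let w : Fin (2*n+1) → ℂ := fun _ => 1
    let A : Matrix (Fin (2*n+1)) (Fin (n+1)) ℂ :=
      Matrix.of fun i j => (T ^ (j : ℕ) *ᵥ w) i
    let B : Matrix (Fin (2*n+1)) (Fin n) ℂ :=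
      Matrix.of fun i j => (T ^ ((j : ℕ) + 1) *ᵥ w) i
    let C : Matrix (Fin (2*n+1)) (Fin n) ℂ :=
      Matrix.of fun i j => (T ^ (j : ℕ) *ᵥ w) i
    let V1 := A
    let V3 := H23⁻¹ * H21 * B
    let V2 := H32⁻¹ * H31 * C
    (H12 * V2 = H13 * V3) ∧
    (∀ j : Fin n, ∃ j' : Fin (n+1),
      (fun i => (H23 * V3) i j) = (fun i => (H21 * V1) i j')) ∧
    (∀ j : Fin n, ∃ j' : Fin (n+1),
      (fun i => (H32 * V2) i j) = (fun i => (H31 * V1) i j')) := by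
  rw [← hd12.diagonal_diag, ← hd13.diagonal_diag, ← hd21.diagonal_diag,
      ← hd23.diagonal_diag, ← hd31.diagonal_diag, ← hd32.diagonal_diag] at *
  set v12 := H12.diag
  set v13 := H13.diag
  set v21 := H21.diag
  set v23 := H23.diag
  set v31 := H31.diag
  set v32 := H32.diag
  have h12 := diag_unit_entries v12 hu12
  have h13 := diag_unit_entries v13 hu13
  have h21 := diag_unit_entries v21 hu21
  have h23 := diag_unit_entries v23 hu23
  have h31 := diag_unit_entries v31 hu31
  have h32 := diag_unit_entries v32 hu32
  intro T w A B C V1 V3 V2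
  set t : Fin (2*n+1) → ℂ := fun i =>
    v12 i * (v21 i)⁻¹ * v23 i * (v32 i)⁻¹ * v31 i * (v13 i)⁻¹ with ht
  have hT : T = Matrix.diagonal t := by
    show diagonal v12 * (diagonal v21)⁻¹ * diagonal v23 * (diagonal v32)⁻¹
        * diagonal v31 * (diagonal v13)⁻¹ = _
    rw [inv_diag_eq v21 h21, inv_diag_eq v32 h32, inv_diag_eq v13 h13]
    simp only [Matrix.diagonal_mul_diagonal]
    rfl
  -- entry formulas
  have hA : ∀ (i : Fin (2*n+1)) (j : Fin (n+1)), A i j = (t i) ^ (j : ℕ) := by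
    intro i j
    show (T ^ (j:ℕ) *ᵥ w) i = _
    rw [hT, Matrix.diagonal_pow, Matrix.mulVec_diagonal]
    simp [w]
  have hB : ∀ (i : Fin (2*n+1)) (j : Fin n), B i j = (t i) ^ ((j : ℕ)+1) := by
    intro i j
    show (T ^ ((j:ℕ)+1) *ᵥ w) i = _
    rw [hT, Matrix.diagonal_pow, Matrix.mulVec_diagonal]
    simp [w]
  have hC : ∀ (i : Fin (2*n+1)) (j : Fin n), C i j = (t i) ^ (j : ℕ) := by
    intro i j
    show (T ^ (j:ℕ) *ᵥ w) i = _
    rw [hT, Matrix.diagonal_pow, Matrix.mulVec_diagonal]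
    simp [w]
  have hV3 : V3 = Matrix.diagonal (fun i => (v23 i)⁻¹ * v21 i) * B := by
    show (diagonal v23)⁻¹ * diagonal v21 * B = _
    rw [inv_diag_eq v23 h23, Matrix.diagonal_mul_diagonal]
  have hV2 : V2 = Matrix.diagonal (fun i => (v32 i)⁻¹ * v31 i) * C := by
    show (diagonal v32)⁻¹ * diagonal v31 * C = _
    rw [inv_diag_eq v32 h32, Matrix.diagonal_mul_diagonal]
  refine ⟨?_, ?_, ?_⟩
  · ext i j
    show (diagonal v12 * V2) i j = (diagonal v13 * V3) i j
    rw [hV2, hV3, ← Matrix.mul_assoc, ← Matrix.mul_assoc,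
      Matrix.diagonal_mul_diagonal, Matrix.diagonal_mul_diagonal,
      diag_mul_entry, diag_mul_entry, hB, hC]
    have e1 : v13 i * (v13 i)⁻¹ = 1 := mul_inv_cancel₀ (h13 i)
    have e2 : v21 i * (v21 i)⁻¹ = 1 := mul_inv_cancel₀ (h21 i)
    have e3 : v23 i * (v23 i)⁻¹ = 1 := mul_inv_cancel₀ (h23 i)
    have key : v12 i * ((v32 i)⁻¹ * v31 i) = v13 i * ((v23 i)⁻¹ * v21 i) * t i := by
      simp only [ht]
      linear_combination
        (-(v12 i * (v32 i)⁻¹ * v31 i) * (v21 i * (v21 i)⁻¹) * (v23 i * (v23 i)⁻¹)) * e1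
        + (-(v12 i * (v32 i)⁻¹ * v31 i) * (v23 i * (v23 i)⁻¹)) * e2
        + (-(v12 i * (v32 i)⁻¹ * v31 i)) * e3
    rw [pow_succ]
    linear_combination (t i ^ (j : ℕ)) * key
  · intro j
    refine ⟨⟨(j : ℕ) + 1, by omega⟩, ?_⟩
    funext i
    show (diagonal v23 * V3) i j = (diagonal v21 * V1) i _
    rw [hV3, ← Matrix.mul_assoc, Matrix.diagonal_mul_diagonal,
      diag_mul_entry, diag_mul_entry, hB]
    show v23 i * ((v23 i)⁻¹ * v21 i) * t i ^ ((j:ℕ)+1) = v21 i * A i ⟨(j:ℕ)+1, _⟩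
    rw [hA, mul_inv_cancel_left₀ (h23 i)]
  · intro j
    refine ⟨⟨(j : ℕ), by omega⟩, ?_⟩
    funext i
    show (diagonal v32 * V2) i j = (diagonal v31 * V1) i _
    rw [hV2, ← Matrix.mul_assoc, Matrix.diagonal_mul_diagonal,
      diag_mul_entry, diag_mul_entry, hC]
    show v32 i * ((v32 i)⁻¹ * v31 i) * t i ^ (j:ℕ) = v31 i * A i ⟨(j:ℕ), _⟩
    rw [hA, mul_inv_cancel_left₀ (h32 i)]
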